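/- Suppose Xₙ converges in distribution to X with X, Xₙ > 0 almost surely, and let α > 0. Set ρₙ = 1 − Xₙ/n^α. Then 1/(n^α log|ρₙ|) converges in distribution to −1/X as n → ∞. -/

import Mathlib

open MeasureTheory ProbabilityTheory Filter Topology

section Aux

variable {Ω : Type*} [MeasureSpace Ω] [IsProbabilityMeasure (ℙ : Measure Ω)]

lemma aux_abs_le (A B S : Set Ω) (h1 : A \ B ⊆ S) (h2 : B \ A ⊆ S) :
    |(ℙ A).toReal - (ℙ B).toReal| ≤ (ℙ S).toReal := by
  have hfin : ∀ T : Set Ω, ℙ T ≠ ⊤ := fun T => (measure_lt_top ℙ T).ne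
  have key : ∀ C D : Set Ω, C \ D ⊆ S → (ℙ C).toReal - (ℙ D).toReal ≤ (ℙ S).toReal := by
    intro C D h
    have h1 : ℙ C ≤ ℙ D + ℙ S := le_trans (measure_le_inter_add_diff ℙ C D)
      (add_le_add (measure_mono Set.inter_subset_right) (measure_mono h))
    have h2 : (ℙ C).toReal ≤ (ℙ D).toReal + (ℙ S).toReal := by
      have := ENNReal.toReal_mono (by simp [hfin, ENNReal.add_ne_top]) h1
      rwa [ENNReal.toReal_add (hfin D) (hfin S)] at this
    linarith
  rw [abs_sub_le_iff]
  exact ⟨by linarith [key A B h1], by linarith [key B A h2]⟩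

lemma cdf_mono (Y : Ω → ℝ) : Monotone (fun t => (ℙ {ω | Y ω ≤ t}).toReal) := by
  intro s t hst
  exact ENNReal.toReal_mono (measure_lt_top ℙ _).ne
    (measure_mono (fun ω h => le_trans h hst))

end Aux

lemma exists_cont_pt {F : ℝ → ℝ} (hF : Monotone F) (a b : ℝ) (hab : a < b) :
    ∃ c, a < c ∧ c < b ∧ ContinuousAt F c := by
  have h := hF.countable_not_continuousAt
  have hd : Dense {x | ¬ ContinuousAt F x}ᶜ := h.dense_compl ℝ
  obtain ⟨c, hc, hc2⟩ := hd.exists_mem_open isOpen_Ioo (Set.nonempty_Ioo.2 hab)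
  exact ⟨c, hc2.1, hc2.2, not_not.1 hc⟩

lemma tendsto_cdf_moving {F : ℝ → ℝ} {Fn : ℕ → ℝ → ℝ} (hF : Monotone F)
    (hFn : ∀ n, Monotone (Fn n))
    (hconv : ∀ t, ContinuousAt F t → Tendsto (fun n => Fn n t) atTop (𝓝 (F t)))
    {c : ℝ} (hc : ContinuousAt F c) {cn : ℕ → ℝ} (hcn : Tendsto cn atTop (𝓝 c)) :
    Tendsto (fun n => Fn n (cn n)) atTop (𝓝 (F c)) := by
  rw [Metric.tendsto_nhds]
  intro ε hε
  obtain ⟨δ, hδ, hδ2⟩ := Metric.continuousAt_iff.1 hc (ε/2) (by linarith)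
  obtain ⟨a, ha1, ha2, ha3⟩ := exists_cont_pt hF (c - δ) c (by linarith)
  obtain ⟨b, hb1, hb2, hb3⟩ := exists_cont_pt hF c (c + δ) (by linarith)
  have hFa : |F a - F c| < ε/2 := by
    have := hδ2 (x := a) (by rw [Real.dist_eq, abs_lt]; constructor <;> linarith)
    rwa [Real.dist_eq] at this
  have hFb : |F b - F c| < ε/2 := by
    have := hδ2 (x := b) (by rw [Real.dist_eq, abs_lt]; constructor <;> linarith)
    rwa [Real.dist_eq] at this
  have h1 : ∀ᶠ n in atTop, |Fn n a - F a| < ε/2 := by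
    have := hconv a ha3
    rw [Metric.tendsto_nhds] at this
    simpa [Real.dist_eq] using this (ε/2) (by linarith)
  have h2 : ∀ᶠ n in atTop, |Fn n b - F b| < ε/2 := by
    have := hconv b hb3
    rw [Metric.tendsto_nhds] at this
    simpa [Real.dist_eq] using this (ε/2) (by linarith)
  have h3 : ∀ᶠ n in atTop, cn n ∈ Set.Ioo a b := hcn (Ioo_mem_nhds ha2 hb1)
  filter_upwards [h1, h2, h3] with n hn1 hn2 hn3
  have hl : Fn n a ≤ Fn n (cn n) := hFn n hn3.1.le
  have hr : Fn n (cn n) ≤ Fn n b := hFn n hn3.2.le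
  rw [Real.dist_eq, abs_lt]
  rw [abs_lt] at hn1 hn2 hFa hFb
  constructor <;> linarith

lemma cn_tendsto {α t : ℝ} (hα : 0 < α) (ht : t < 0) :
    Tendsto (fun n : ℕ => (n:ℝ)^α * (1 - Real.exp (1/(t * (n:ℝ)^α)))) atTop (𝓝 (-1/t)) := by
  have hN : Tendsto (fun n : ℕ => (n:ℝ)^α) atTop atTop :=
    (tendsto_rpow_atTop hα).comp tendsto_natCast_atTop_atTop
  have htN : Tendsto (fun n : ℕ => t * (n:ℝ)^α) atTop atBot :=
    hN.const_mul_atTop_of_neg ht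
  have hpos : Tendsto (fun n : ℕ => -(t * (n:ℝ)^α)) atTop atTop :=
    tendsto_neg_atTop_iff.2 htN
  have hu : Tendsto (fun n : ℕ => 1/(t * (n:ℝ)^α)) atTop (𝓝 0) := by
    have := (hpos.inv_tendsto_atTop).neg
    simp only [Pi.inv_apply, neg_zero] at this
    refine this.congr (fun n => ?_)
    rw [one_div, ← inv_neg, neg_neg]
  have hslope : Tendsto (slope Real.exp 0) (𝓝[≠] 0) (𝓝 1) := by
    have := Real.hasDerivAt_exp 0
    rw [hasDerivAt_iff_tendsto_slope] at this
    simpa using this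
  have hune : ∀ᶠ n : ℕ in atTop, 1/(t * (n:ℝ)^α) ≠ 0 := by
    filter_upwards [htN.eventually_lt_atBot 0] with n hn
    exact one_div_ne_zero hn.ne
  have hu' : Tendsto (fun n : ℕ => 1/(t * (n:ℝ)^α)) atTop (𝓝[≠] 0) :=
    tendsto_nhdsWithin_of_tendsto_nhds_of_eventually_within _ hu hune
  have hs : Tendsto (fun n : ℕ => slope Real.exp 0 (1/(t * (n:ℝ)^α))) atTop (𝓝 1) :=
    hslope.comp hu'
  have hmain : Tendsto (fun n : ℕ => -(slope Real.exp 0 (1/(t * (n:ℝ)^α)))/t) atTop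
      (𝓝 (-1/t)) := hs.neg.div_const t
  refine hmain.congr' ?_
  filter_upwards [htN.eventually_lt_atBot 0] with n hn
  have htNne : t * (n:ℝ)^α ≠ 0 := hn.ne
  rw [slope_def_field]
  field_simp
  have hNne : (n:ℝ)^α ≠ 0 := right_ne_zero_of_mul htNne
  have htne : t ≠ 0 := ht.ne
  rw [Real.exp_zero, sub_zero]
  field_simp
  ring

lemma event_iff {N x t : ℝ} (hN : 0 < N) (hx : 0 < x) (hxN : x < N) (ht : t < 0) :
    1 / (N * Real.log |1 - x / N|) ≤ t ↔ x ≤ N * (1 - Real.exp (1/(t*N))) := by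
  have h1 : 0 < 1 - x / N := by
    have : x / N < 1 := (div_lt_one hN).2 hxN
    linarith
  have h2 : 1 - x / N < 1 := by
    have : 0 < x / N := div_pos hx hN
    linarith
  rw [abs_of_pos h1]
  set L := Real.log (1 - x / N) with hLdef
  have hL : L < 0 := Real.log_neg h1 h2
  have hNL : N * L < 0 := mul_neg_of_pos_of_neg hN hL
  rw [div_le_iff_of_neg hNL]
  constructor
  · intro h
    have h3 : 1/t ≤ N * L := by
      rw [div_le_iff_of_neg ht]
      linarith [h, mul_comm t (N*L)]
    have h4 : 1/(t*N) ≤ L := by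
      rw [div_le_iff_of_neg (mul_neg_of_neg_of_pos ht hN)]
      nlinarith
    have h5 : Real.exp (1/(t*N)) ≤ 1 - x/N := by
      rw [← Real.exp_log h1]
      exact Real.exp_le_exp.2 h4
    have h6 : x/N ≤ 1 - Real.exp (1/(t*N)) := by linarith
    calc x = (x/N) * N := by field_simp
    _ ≤ (1 - Real.exp (1/(t*N))) * N := by nlinarith
    _ = N * (1 - Real.exp (1/(t*N))) := mul_comm _ _
  · intro h
    have h6 : x/N ≤ 1 - Real.exp (1/(t*N)) := by
      rw [div_le_iff₀ hN]; nlinarith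
    have h5 : Real.exp (1/(t*N)) ≤ 1 - x/N := by linarith
    have h4 : 1/(t*N) ≤ L := by
      rw [hLdef, Real.le_log_iff_exp_le h1]; exact h5
    have h3 : 1/t ≤ N * L := by
      have := (div_le_iff_of_neg (mul_neg_of_neg_of_pos ht hN)).1 h4
      rw [div_le_iff_of_neg ht]
      nlinarith
    rw [div_le_iff_of_neg ht] at h3
    linarith [h3, mul_comm (N*L) t]

lemma event_nonneg {N x t : ℝ} (hN : 0 < N) (hx : 0 < x) (hxN : x < N) (ht : 0 ≤ t) :
    1 / (N * Real.log |1 - x / N|) ≤ t := by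
  have h1 : 0 < 1 - x / N := by
    have : x / N < 1 := (div_lt_one hN).2 hxN
    linarith
  have h2 : 1 - x / N < 1 := by
    have : 0 < x / N := div_pos hx hN
    linarith
  rw [abs_of_pos h1]
  have hL : Real.log (1 - x / N) < 0 := Real.log_neg h1 h2
  exact le_trans (div_neg_of_pos_of_neg one_pos (mul_neg_of_pos_of_neg hN hL)).le ht

/-- If `Xₙ → X` in distribution with `X, Xₙ > 0` a.s. and `α > 0`, and
`ρₙ = 1 - Xₙ/n^α`, then `1/(n^α log |ρₙ|)` converges in distribution to `-1/X`. -/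
theorem reciprocal_log_convergence {Ω : Type*} [MeasureSpace Ω]
    [IsProbabilityMeasure (ℙ : Measure Ω)]
    (X : Ω → ℝ) (Xn : ℕ → Ω → ℝ)
    (hX : Measurable X) (hXn : ∀ n, Measurable (Xn n))
    (hXpos : ∀ᵐ ω ∂ℙ, 0 < X ω) (hXnpos : ∀ n, ∀ᵐ ω ∂ℙ, 0 < Xn n ω)
    (α : ℝ) (hα : 0 < α)
    (hdist : ∀ t : ℝ, ContinuousAt (fun s => (ℙ {ω | X ω ≤ s}).toReal) t →
      Tendsto (fun n => (ℙ {ω | Xn n ω ≤ t}).toReal) atTop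
        (𝓝 ((ℙ {ω | X ω ≤ t}).toReal))) :
    ∀ t : ℝ, ContinuousAt (fun s => (ℙ {ω | -1 / X ω ≤ s}).toReal) t →
      Tendsto
        (fun m : ℕ => (ℙ {ω |
          1 / ((m : ℝ) ^ α * Real.log |1 - Xn m ω / (m : ℝ) ^ α|) ≤ t}).toReal)
        atTop (𝓝 ((ℙ {ω | -1 / X ω ≤ t}).toReal)) := by
  intro t hGt
  have hFmono : Monotone (fun s => (ℙ {ω | X ω ≤ s}).toReal) := cdf_mono X
  have hFnmono : ∀ n, Monotone (fun s => (ℙ {ω | Xn n ω ≤ s}).toReal) :=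
    fun n => cdf_mono (Xn n)
  have hNtop : Tendsto (fun m : ℕ => (m:ℝ)^α) atTop atTop :=
    (tendsto_rpow_atTop hα).comp tendsto_natCast_atTop_atTop
  have hnull : ∀ m, ℙ {ω | ¬ 0 < Xn m ω} = 0 := fun m => ae_iff.1 (hXnpos m)
  have htail : ∀ ε : ℝ, 0 < ε → ∃ M, 0 < M ∧
      ContinuousAt (fun s => (ℙ {ω | X ω ≤ s}).toReal) M ∧
      1 - ε < (ℙ {ω | X ω ≤ M}).toReal := by
    intro ε hε
    have hmono : Monotone (fun k : ℕ => {ω | X ω ≤ (k:ℝ)}) := by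
      intro i j hij ω h
      simp only [Set.mem_setOf_eq] at h ⊢
      exact le_trans h (Nat.cast_le.2 hij)
    have huniv : (⋃ k : ℕ, {ω | X ω ≤ (k:ℝ)}) = Set.univ := by
      ext ω
      simp only [Set.mem_iUnion, Set.mem_univ, iff_true, Set.mem_setOf_eq]
      exact exists_nat_ge (X ω)
    have h1 : Tendsto (fun k : ℕ => ℙ {ω | X ω ≤ (k:ℝ)}) atTop (𝓝 1) := by
      have h0 := tendsto_measure_iUnion_atTop (μ := (ℙ : Measure Ω)) hmono
      rw [huniv, measure_univ] at h0
      exact h0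
    have h2 : Tendsto (fun k : ℕ => (ℙ {ω | X ω ≤ ((k:ℕ):ℝ)}).toReal) atTop (𝓝 1) := by
      have h3 := (ENNReal.tendsto_toReal (by norm_num : (1:ENNReal) ≠ ⊤)).comp h1
      exact h3
    obtain ⟨k, hk⟩ := (h2.eventually (eventually_gt_nhds (by linarith : 1 - ε < 1))).exists
    obtain ⟨M, hM1, _, hM3⟩ := exists_cont_pt hFmono (max (k:ℝ) 1) (max (k:ℝ) 1 + 1)
      (by linarith)
    refine ⟨M, lt_of_lt_of_le zero_lt_one (le_trans (le_max_right _ _) hM1.le), hM3, ?_⟩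
    exact lt_of_lt_of_le hk (hFmono (le_trans (le_max_left _ _) hM1.le))
  rcases lt_or_ge t 0 with ht | ht
  · -- case t < 0
    have hc_pos : 0 < -1/t := div_pos_of_neg_of_neg (by norm_num) ht
    have hct : -1/(-1/t) = t := by field_simp
    have hFG : ∀ s, 0 < s →
        (ℙ {ω | X ω ≤ s}).toReal = (ℙ {ω | -1 / X ω ≤ -1/s}).toReal := by
      intro s hs
      apply congrArg ENNReal.toReal
      apply measure_congr
      filter_upwards [hXpos] with ω hω
      show (X ω ≤ s) = (-1 / X ω ≤ -1 / s)
      rw [eq_iff_iff, neg_div, neg_div, neg_le_neg_iff, one_div_le_one_div hs hω]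
    have hinv : ContinuousAt (fun s : ℝ => -1/s) (-1/t) := by
      have heq : (fun s : ℝ => -1/s) = fun s : ℝ => -(s⁻¹) := by
        funext s; rw [neg_div, one_div]
      rw [heq]
      exact (continuousAt_inv₀ (ne_of_gt hc_pos)).neg
    have hcG : ContinuousAt (fun s => (ℙ {ω | -1 / X ω ≤ s}).toReal) (-1/(-1/t)) := by
      rw [hct]; exact hGt
    have hcomp : ContinuousAt (fun s : ℝ => (ℙ {ω | -1 / X ω ≤ -1/s}).toReal) (-1/t) := by
      have := hcG.comp hinv
      exact this
    have hcontF : ContinuousAt (fun s => (ℙ {ω | X ω ≤ s}).toReal) (-1/t) := by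
      apply hcomp.congr
      filter_upwards [isOpen_Ioi.eventually_mem (Set.mem_Ioi.2 hc_pos)] with s hs
      exact (hFG s (Set.mem_Ioi.1 hs)).symm
    have hGF : (ℙ {ω | -1 / X ω ≤ t}).toReal = (ℙ {ω | X ω ≤ -1/t}).toReal := by
      rw [hFG (-1/t) hc_pos, hct]
    rw [hGF]
    have hcn := cn_tendsto (α := α) (t := t) hα ht
    have hmov := tendsto_cdf_moving hFmono hFnmono hdist hcontF hcn
    rw [Metric.tendsto_nhds]
    intro ε hε
    obtain ⟨M, hM0, hMc, hMF⟩ := htail (ε/4) (by linarith)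
    have hFnM := hdist M hMc
    have ev1 : ∀ᶠ m in atTop, 1 - ε/2 < (ℙ {ω | Xn m ω ≤ M}).toReal :=
      hFnM.eventually (eventually_gt_nhds (by linarith))
    have ev2 := Metric.tendsto_nhds.1 hmov (ε/2) (by linarith)
    have ev3 : ∀ᶠ m : ℕ in atTop,
        (m:ℝ)^α * (1 - Real.exp (1/(t * (m:ℝ)^α))) < -1/t + 1 :=
      hcn.eventually (eventually_lt_nhds (by linarith))
    have ev4 : ∀ᶠ m : ℕ in atTop, max M (-1/t + 1) < (m:ℝ)^α :=
      hNtop.eventually_gt_atTop _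
    filter_upwards [ev1, ev2, ev3, ev4] with m h1 h2 h3 h4
    have hMN : M < (m:ℝ)^α := lt_of_le_of_lt (le_max_left _ _) h4
    have hcN : -1/t + 1 < (m:ℝ)^α := lt_of_le_of_lt (le_max_right _ _) h4
    have hN : (0:ℝ) < (m:ℝ)^α := hM0.trans hMN
    set A : Set Ω := {ω | 1 / ((m:ℝ)^α * Real.log |1 - Xn m ω / (m:ℝ)^α|) ≤ t} with hA
    set B : Set Ω := {ω | Xn m ω ≤ (m:ℝ)^α * (1 - Real.exp (1/(t * (m:ℝ)^α)))} with hB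
    set S : Set Ω := {ω | ¬ 0 < Xn m ω} ∪ {ω | M < Xn m ω} with hS
    have hsub1 : A \ B ⊆ S := by
      rintro ω ⟨hAω, hBω⟩
      by_contra hSω
      simp only [hS, Set.mem_union, Set.mem_setOf_eq, not_or, not_not, not_lt, not_le] at hSω
      obtain ⟨hpos, hle⟩ := hSω
      exact hBω ((event_iff hN hpos (lt_of_le_of_lt hle hMN) ht).1 hAω)
    have hsub2 : B \ A ⊆ S := by
      rintro ω ⟨hBω, hAω⟩
      by_contra hSω
      simp only [hS, Set.mem_union, Set.mem_setOf_eq, not_or, not_not, not_lt, not_le] at hSω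
      obtain ⟨hpos, _⟩ := hSω
      have hxN : Xn m ω < (m:ℝ)^α := lt_of_le_of_lt hBω (h3.trans hcN)
      exact hAω ((event_iff hN hpos hxN ht).2 hBω)
    have habs := aux_abs_le A B S hsub1 hsub2
    have hSle : ℙ S ≤ ℙ {ω | M < Xn m ω} := by
      refine le_trans (measure_union_le _ _) ?_
      rw [hnull m, zero_add]
    have hcompl : {ω | M < Xn m ω} = {ω | Xn m ω ≤ M}ᶜ := by
      ext ω; simp [not_le]
    rw [hcompl, prob_compl_eq_one_sub (measurableSet_le (hXn m) measurable_const)] at hSle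
    have hStoReal : (ℙ S).toReal ≤ 1 - (ℙ {ω | Xn m ω ≤ M}).toReal := by
      have hne : (1 : ENNReal) - ℙ {ω | Xn m ω ≤ M} ≠ ⊤ :=
        ne_top_of_le_ne_top (by norm_num) tsub_le_self
      have := ENNReal.toReal_mono hne hSle
      rwa [ENNReal.toReal_sub_of_le prob_le_one (by norm_num), ENNReal.toReal_one] at this
    rw [Real.dist_eq] at h2 ⊢
    have htri := abs_sub_le ((ℙ A).toReal) ((ℙ B).toReal)
      ((ℙ {ω | X ω ≤ -1/t}).toReal)
    have h2' : |(ℙ B).toReal - (ℙ {ω | X ω ≤ -1/t}).toReal| < ε/2 := h2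
    rw [abs_lt] at h2' ⊢
    rw [abs_le] at habs
    rw [abs_sub_le_iff] at htri
    constructor <;> nlinarith [habs.1, habs.2, h2'.1, h2'.2, hStoReal, h1]
  · -- case 0 ≤ t
    have hone : (ℙ {ω | -1 / X ω ≤ t}).toReal = 1 := by
      have hae : {ω | -1 / X ω ≤ t} =ᵐ[ℙ] (Set.univ : Set Ω) := by
        filter_upwards [hXpos] with ω hω
        have hlt : -1 / X ω < 0 := div_neg_of_neg_of_pos (by norm_num : (-1:ℝ) < 0) hω
        show (-1 / X ω ≤ t) = True
        simp only [eq_iff_iff, iff_true]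
        exact le_trans hlt.le ht
      rw [measure_congr hae, measure_univ, ENNReal.toReal_one]
    rw [hone]
    rw [Metric.tendsto_nhds]
    intro ε hε
    obtain ⟨M, hM0, hMc, hMF⟩ := htail (ε/2) (by linarith)
    have hFnM := hdist M hMc
    have ev1 : ∀ᶠ m in atTop, 1 - ε < (ℙ {ω | Xn m ω ≤ M}).toReal :=
      hFnM.eventually (eventually_gt_nhds (by linarith))
    have ev4 : ∀ᶠ m : ℕ in atTop, M < (m:ℝ)^α := hNtop.eventually_gt_atTop _
    filter_upwards [ev1, ev4] with m h1 h4
    have hN : (0:ℝ) < (m:ℝ)^α := hM0.trans h4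
    set A : Set Ω := {ω | 1 / ((m:ℝ)^α * Real.log |1 - Xn m ω / (m:ℝ)^α|) ≤ t} with hA
    have key : ℙ {ω | Xn m ω ≤ M} ≤ ℙ A := by
      have hdiff : {ω | Xn m ω ≤ M} \ A ⊆ {ω | ¬ 0 < Xn m ω} := by
        rintro ω ⟨hle, hAω⟩
        by_contra hc
        simp only [Set.mem_setOf_eq, not_not] at hc
        exact hAω (event_nonneg hN hc (lt_of_le_of_lt hle h4) ht)
      calc ℙ {ω | Xn m ω ≤ M}
          ≤ ℙ ({ω | Xn m ω ≤ M} ∩ A) + ℙ ({ω | Xn m ω ≤ M} \ A) :=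
            measure_le_inter_add_diff _ _ _
        _ ≤ ℙ A + 0 := add_le_add (measure_mono Set.inter_subset_right)
            (le_trans (measure_mono hdiff) (le_of_eq (hnull m)))
        _ = ℙ A := add_zero _
    have h6 : (ℙ {ω | Xn m ω ≤ M}).toReal ≤ (ℙ A).toReal :=
      ENNReal.toReal_mono (measure_lt_top ℙ A).ne key
    have h7 : (ℙ A).toReal ≤ 1 := by
      have := ENNReal.toReal_mono (by norm_num : (1:ENNReal) ≠ ⊤) (prob_le_one (μ := ℙ) (s := A))
      simpa using this
    rw [Real.dist_eq, abs_lt]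
    constructor <;> linarith
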